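/- Let H be the suspension of the cycle C_t (t >= 3): vertices x_1,...,x_t,y_1,...,y_t, edges x_ix_{i+1} (indices mod t) and x_iy_i for all i. Let w be a weight function assigning weight w >= 2 to each cycle edge x_ix_{i+1} and weight 1 to each pendant edge x_iy_i, and let I(H_w) be the corresponding weighted edge ideal. Then sqrt(I(H_w) : (x_1...x_t)^{w-1}) = I(C_t) + (y_1,...,y_t), where I(C_t) = (x_1x_2,...,x_{t-1}x_t,x_tx_1). -/

import Mathlib

open MvPolynomial AddMonoidAlgebra

lemma sqfree_radical_le {σ : Type*} (m : MonomialOrder σ) {K : Type*} [Field K]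
    {S : Set (σ →₀ ℕ)} (hS : ∀ s ∈ S, ∀ i, s i ≤ 1) :
    (Ideal.span ((fun s => MvPolynomial.monomial s (1 : K)) '' S)).radical ≤
      Ideal.span ((fun s => MvPolynomial.monomial s (1 : K)) '' S) := by
  classical
  set J := Ideal.span ((fun s => MvPolynomial.monomial s (1 : K)) '' S) with hJ
  set D : (σ →₀ ℕ) → m.syn := ⇑m.toSyn with hD'
  have hD : Function.Injective D := m.toSyn.injective
  have hadd : ∀ a b : σ →₀ ℕ, D (a + b) = D a + D b := map_add m.toSyn
  have hlcpow : ∀ (g : MvPolynomial σ K) (n : ℕ),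
      (g ^ n).leadingCoeff D = g.leadingCoeff D ^ n := by
    intro g n
    induction n with
    | zero => simpa [pow_zero] using monic_one (R := K) (A := σ →₀ ℕ) (D := D) hD
    | succ n ih => rw [pow_succ, leadingCoeff_mul hD hadd, ih, pow_succ]
  have main : ∀ c : ℕ, ∀ g : MvPolynomial σ K, g.support.card = c → g ∈ J.radical → g ∈ J := by
    intro c
    induction c using Nat.strong_induction_on with
    | _ c ih =>
      intro g hc hg
      rcases eq_or_ne g 0 with rfl | hg0
      · exact J.zero_mem
      obtain ⟨n, hn⟩ := Ideal.mem_radical_iff.mp hg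
      obtain ⟨a, hamem, hda⟩ := exists_supDegree_mem_support D hg0
      have hgn0 : (g : MvPolynomial σ K) ^ n ≠ 0 := pow_ne_zero _ hg0
      have hlcne : g.leadingCoeff D ≠ 0 := (leadingCoeff_ne_zero hD).mpr hg0
      have hsd : ∀ k : ℕ, (g ^ k).supDegree D = D (k • a) := by
        intro k
        induction k with
        | zero =>
          rw [pow_zero, zero_smul]
          have h1 : (1 : MvPolynomial σ K) = AddMonoidAlgebra.single 0 1 := rfl
          rw [h1, supDegree_single_ne_zero _ one_ne_zero]
        | succ k ihk =>
          have hne : (g : MvPolynomial σ K) ^ k ≠ 0 := pow_ne_zero _ hg0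
          have hlc : (g ^ k).leadingCoeff D * g.leadingCoeff D ≠ 0 := by
            rw [hlcpow]
            exact mul_ne_zero (pow_ne_zero _ hlcne) hlcne
          rw [pow_succ, supDegree_mul hD hadd hlc hne hg0, ihk, hda, ← hadd, ← succ_nsmul]
      have hmem2 : (n • a) ∈ (g ^ n).support := by
        have h1 := supDegree_mem_support (D := D) hD hgn0
        rw [hsd n, Function.leftInverse_invFun hD (n • a)] at h1
        exact h1
      obtain ⟨s, hsS, hsle⟩ := MvPolynomial.mem_ideal_span_monomial_image.mp hn _ hmem2
      have hsa : s ≤ a := by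
        rw [Finsupp.le_def]
        intro i
        have h1 := Finsupp.le_def.mp hsle i
        rw [Finsupp.smul_apply, smul_eq_mul] at h1
        have h2 := hS s hsS i
        rcases Nat.eq_zero_or_pos (a i) with h | h
        · rw [h, mul_zero] at h1; omega
        · omega
      have hmono : (MvPolynomial.monomial a (MvPolynomial.coeff a g) : MvPolynomial σ K) ∈ J := by
        rw [hJ, MvPolynomial.mem_ideal_span_monomial_image]
        intro xi hxi
        rw [MvPolynomial.support_monomial,
          if_neg (MvPolynomial.mem_support_iff.mp hamem)] at hxi
        rw [Finset.mem_singleton] at hxi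
        subst hxi
        exact ⟨s, hsS, hsa⟩
      set g' : MvPolynomial σ K := g - MvPolynomial.monomial a (MvPolynomial.coeff a g) with hg'
      have hsupp' : g'.support = g.support.erase a := by
        ext b
        rw [Finset.mem_erase, MvPolynomial.mem_support_iff, MvPolynomial.mem_support_iff, hg',
          MvPolynomial.coeff_sub, MvPolynomial.coeff_monomial]
        by_cases hab : a = b
        · subst hab; simp
        · rw [if_neg hab]; simp [Ne.symm hab]
      have hcard : g'.support.card < c := by
        rw [hsupp', ← hc]
        exact Finset.card_erase_lt_of_mem hamem
      have hg'r : g' ∈ J.radical := J.radical.sub_mem hg (J.le_radical hmono)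
      have hg'J : g' ∈ J := ih _ hcard g' rfl hg'r
      have hge : g = g' + MvPolynomial.monomial a (MvPolynomial.coeff a g) := by
        rw [hg']; ring
      rw [hge]
      exact J.add_mem hg'J hmono
  intro g hg
  exact main g.support.card g rfl hg

lemma image_setOf_mono {σ : Type*} {K : Type*} [CommSemiring K] {ι : Type*}
    (G : ι → (σ →₀ ℕ)) :
    (fun s => MvPolynomial.monomial s (1 : K)) '' {s | ∃ i : ι, s = G i}
      = {p | ∃ i : ι, p = MvPolynomial.monomial (G i) (1 : K)} := by
  ext p
  constructor
  · rintro ⟨s, ⟨i, rfl⟩, rfl⟩; exact ⟨i, rfl⟩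
  · rintro ⟨i, rfl⟩; exact ⟨G i, ⟨i, rfl⟩, rfl⟩

/-- exponent vector of a cycle edge -/
noncomputable def stmt9A (t : ℕ) [NeZero t] (i : Fin t) : (Fin t ⊕ Fin t) →₀ ℕ :=
  Finsupp.single (Sum.inl i) 1 + Finsupp.single (Sum.inl (i + 1)) 1

/-- exponent vector of a pendant edge -/
noncomputable def stmt9B (t : ℕ) (i : Fin t) : (Fin t ⊕ Fin t) →₀ ℕ :=
  Finsupp.single (Sum.inl i) 1 + Finsupp.single (Sum.inr i) 1

/-- exponent vector of a pendant vertex -/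
noncomputable def stmt9Y (t : ℕ) (i : Fin t) : (Fin t ⊕ Fin t) →₀ ℕ :=
  Finsupp.single (Sum.inr i) 1

/-- exponent vector of the product of all cycle vertices -/
noncomputable def stmt9E (t : ℕ) : (Fin t ⊕ Fin t) →₀ ℕ :=
  ∑ i : Fin t, Finsupp.single (Sum.inl i) 1

lemma stmt9A_apply_inl (t : ℕ) [NeZero t] (i j : Fin t) :
    stmt9A t i (Sum.inl j) = (if i = j then 1 else 0) + (if i + 1 = j then 1 else 0) := by
  simp [stmt9A, Finsupp.single_apply]

lemma stmt9A_apply_inr (t : ℕ) [NeZero t] (i j : Fin t) : stmt9A t i (Sum.inr j) = 0 := by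
  simp [stmt9A, Finsupp.single_apply]

lemma stmt9B_apply_inl (t : ℕ) (i j : Fin t) :
    stmt9B t i (Sum.inl j) = if i = j then 1 else 0 := by
  simp [stmt9B, Finsupp.single_apply]

lemma stmt9B_apply_inr (t : ℕ) (i j : Fin t) :
    stmt9B t i (Sum.inr j) = if i = j then 1 else 0 := by
  simp [stmt9B, Finsupp.single_apply]

lemma stmt9Y_apply_inl (t : ℕ) (i j : Fin t) : stmt9Y t i (Sum.inl j) = 0 := by
  simp [stmt9Y, Finsupp.single_apply]

lemma stmt9Y_apply_inr (t : ℕ) (i j : Fin t) :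
    stmt9Y t i (Sum.inr j) = if i = j then 1 else 0 := by
  simp [stmt9Y, Finsupp.single_apply]

lemma stmt9E_apply_inl (t : ℕ) (j : Fin t) : stmt9E t (Sum.inl j) = 1 := by
  classical
  rw [stmt9E, Finsupp.finset_sum_apply]
  simp [Finsupp.single_apply, Finset.filter_eq']

lemma stmt9E_apply_inr (t : ℕ) (j : Fin t) : stmt9E t (Sum.inr j) = 0 := by
  classical
  rw [stmt9E, Finsupp.finset_sum_apply]
  simp [Finsupp.single_apply]

/-- Let `H` be the suspension of the cycle `C_t` (vertices
`x_i = X (inl i)`, `y_i = X (inr i)`, cycle edges `x_i x_{i+1}` of weight `w ≥ 2`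
and pendant edges `x_i y_i` of weight `1`).  Then
`√(I(H_w) : (x_1 ⋯ x_t)^{w-1}) = I(C_t) + (y_1,…,y_t)`. -/
theorem stmt9 (K : Type*) [Field K] (t : ℕ) [NeZero t] (ht : 3 ≤ t)
    (w : ℕ) (hw : 2 ≤ w) :
    (Submodule.colon
        (Ideal.span
          ({p | ∃ i : Fin t, p = ((X (Sum.inl i) * X (Sum.inl (i + 1)) :
              MvPolynomial (Fin t ⊕ Fin t) K)) ^ w}
            ∪ {p | ∃ i : Fin t, p = (X (Sum.inl i) * X (Sum.inr i) :
              MvPolynomial (Fin t ⊕ Fin t) K)}))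
        (Ideal.span {(∏ i : Fin t, (X (Sum.inl i) :
            MvPolynomial (Fin t ⊕ Fin t) K)) ^ (w - 1)})).radical
      = Ideal.span
          ({p | ∃ i : Fin t, p = (X (Sum.inl i) * X (Sum.inl (i + 1)) :
              MvPolynomial (Fin t ⊕ Fin t) K)}
            ∪ {p | ∃ i : Fin t, p = (X (Sum.inr i) :
              MvPolynomial (Fin t ⊕ Fin t) K)}) := by
  classical
  obtain ⟨t, rfl⟩ : ∃ t', t = t' + 3 := ⟨t - 3, by omega⟩
  -- basic Fin facts
  have hii1 : ∀ i : Fin (t + 3), ¬ (i = i + 1) := by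
    intro i h
    have h2 : (1 : Fin (t + 3)) = 0 := left_eq_add.mp h
    have h3 := congrArg Fin.val h2
    simp [Fin.val_one, Fin.val_zero] at h3
  have hii2 : ∀ i : Fin (t + 3), ¬ (i + 1 = i) := fun i h => hii1 i h.symm
  set d : (Fin (t + 3) ⊕ Fin (t + 3)) →₀ ℕ := (w - 1) • stmt9E (t + 3) with hd
  -- monomial re-descriptions
  have hX : ∀ a : Fin (t + 3) ⊕ Fin (t + 3), (X a : MvPolynomial (Fin (t + 3) ⊕ Fin (t + 3)) K)
      = monomial (Finsupp.single a 1) 1 := by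
    intro a; rw [← pow_one (X a), X_pow_eq_monomial]
  have hXX : ∀ a b : Fin (t + 3) ⊕ Fin (t + 3), (X a * X b : MvPolynomial (Fin (t + 3) ⊕ Fin (t + 3)) K)
      = monomial (Finsupp.single a 1 + Finsupp.single b 1) 1 := by
    intro a b; rw [hX, hX, monomial_mul, one_mul]
  have hprod : ∀ F : Finset (Fin (t + 3)),
      (∏ i ∈ F, (X (Sum.inl i) : MvPolynomial (Fin (t + 3) ⊕ Fin (t + 3)) K))
        = monomial (∑ i ∈ F, Finsupp.single (Sum.inl i) 1) 1 := by
    intro F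
    induction F using Finset.induction_on with
    | empty => simp [MvPolynomial.monomial_zero']
    | insert _ _ hx ih => rw [Finset.prod_insert hx, Finset.sum_insert hx, ih, hX, monomial_mul,
        one_mul]
  -- rewrite the generating sets as images of monomials
  have hIgen : ({p | ∃ i : Fin (t + 3), p = ((X (Sum.inl i) * X (Sum.inl (i + 1)) :
          MvPolynomial (Fin (t + 3) ⊕ Fin (t + 3)) K)) ^ w}
        ∪ {p | ∃ i : Fin (t + 3), p = (X (Sum.inl i) * X (Sum.inr i) :
          MvPolynomial (Fin (t + 3) ⊕ Fin (t + 3)) K)})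
      = (fun s => monomial s (1 : K)) ''
          ({s | ∃ i : Fin (t + 3), s = w • stmt9A (t + 3) i} ∪ {s | ∃ i : Fin (t + 3), s = stmt9B (t + 3) i}) := by
    rw [Set.image_union, image_setOf_mono, image_setOf_mono]
    have e1 : ∀ i : Fin (t + 3), ((X (Sum.inl i) * X (Sum.inl (i + 1)) :
        MvPolynomial (Fin (t + 3) ⊕ Fin (t + 3)) K)) ^ w = monomial (w • stmt9A (t + 3) i) 1 := by
      intro i; rw [hXX, monomial_pow, one_pow, stmt9A]
    have e2 : ∀ i : Fin (t + 3), (X (Sum.inl i) * X (Sum.inr i) :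
        MvPolynomial (Fin (t + 3) ⊕ Fin (t + 3)) K) = monomial (stmt9B (t + 3) i) 1 := by
      intro i; rw [hXX, stmt9B]
    simp_rw [e1, e2]
  have hfgen : ({(∏ i : Fin (t + 3), (X (Sum.inl i) : MvPolynomial (Fin (t + 3) ⊕ Fin (t + 3)) K)) ^ (w - 1)} :
        Set (MvPolynomial (Fin (t + 3) ⊕ Fin (t + 3)) K)) = {monomial d (1 : K)} := by
    rw [hprod Finset.univ, monomial_pow, one_pow, hd, stmt9E]
  have hJgen : ({p | ∃ i : Fin (t + 3), p = (X (Sum.inl i) * X (Sum.inl (i + 1)) :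
          MvPolynomial (Fin (t + 3) ⊕ Fin (t + 3)) K)}
        ∪ {p | ∃ i : Fin (t + 3), p = (X (Sum.inr i) : MvPolynomial (Fin (t + 3) ⊕ Fin (t + 3)) K)})
      = (fun s => monomial s (1 : K)) ''
          ({s | ∃ i : Fin (t + 3), s = stmt9A (t + 3) i} ∪ {s | ∃ i : Fin (t + 3), s = stmt9Y (t + 3) i}) := by
    rw [Set.image_union, image_setOf_mono, image_setOf_mono]
    have e1 : ∀ i : Fin (t + 3), (X (Sum.inl i) * X (Sum.inl (i + 1)) :
        MvPolynomial (Fin (t + 3) ⊕ Fin (t + 3)) K) = monomial (stmt9A (t + 3) i) 1 := by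
      intro i; rw [hXX, stmt9A]
    have e2 : ∀ i : Fin (t + 3), (X (Sum.inr i) : MvPolynomial (Fin (t + 3) ⊕ Fin (t + 3)) K)
        = monomial (stmt9Y (t + 3) i) 1 := by
      intro i; rw [hX, stmt9Y]
    simp_rw [e1, e2]
  rw [hIgen, hfgen, hJgen]
  -- the colon ideal is exactly the target monomial ideal
  have hcolon : Submodule.colon
      (Ideal.span ((fun s => monomial s (1 : K)) ''
        ({s | ∃ i : Fin (t + 3), s = w • stmt9A (t + 3) i} ∪ {s | ∃ i : Fin (t + 3), s = stmt9B (t + 3) i})))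
      (Ideal.span {(monomial d (1 : K) : MvPolynomial (Fin (t + 3) ⊕ Fin (t + 3)) K)})
      = Ideal.span ((fun s => monomial s (1 : K)) ''
        ({s | ∃ i : Fin (t + 3), s = stmt9A (t + 3) i} ∪ {s | ∃ i : Fin (t + 3), s = stmt9Y (t + 3) i})) := by
    apply le_antisymm
    · intro g hg
      rw [Ideal.mem_colon_span_singleton] at hg
      rw [mem_ideal_span_monomial_image] at hg ⊢
      intro mm hmm
      have hmm2 : mm + d ∈ (g * monomial d (1 : K)).support := by
        rw [MvPolynomial.mem_support_iff, MvPolynomial.coeff_mul_monomial, mul_one]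
        exact MvPolynomial.mem_support_iff.mp hmm
      obtain ⟨s, hsSI, hle⟩ := hg _ hmm2
      rcases hsSI with ⟨i, rfl⟩ | ⟨i, rfl⟩
      · -- cycle generator case
        have hm1 : 1 ≤ mm (Sum.inl i) := by
          have h1 := Finsupp.le_def.mp hle (Sum.inl i)
          simp only [Finsupp.smul_apply, Finsupp.add_apply, smul_eq_mul, stmt9A_apply_inl,
            stmt9E_apply_inl, hd, eq_self_iff_true, if_true, hii1, hii2, if_false] at h1
          omega
        have hm2 : 1 ≤ mm (Sum.inl (i + 1)) := by
          have h1 := Finsupp.le_def.mp hle (Sum.inl (i + 1))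
          simp only [Finsupp.smul_apply, Finsupp.add_apply, smul_eq_mul, stmt9A_apply_inl,
            stmt9E_apply_inl, hd, eq_self_iff_true, if_true, hii1, hii2, if_false] at h1
          omega
        refine ⟨stmt9A (t + 3) i, Set.mem_union_left _ ⟨i, rfl⟩, ?_⟩
        rw [Finsupp.le_def]
        rintro (j | j)
        · rw [stmt9A_apply_inl]
          by_cases hj1 : i = j
          · subst hj1
            rw [if_pos rfl, if_neg (hii2 i)]
            omega
          · by_cases hj2 : i + 1 = j
            · subst hj2
              rw [if_neg hj1, if_pos rfl]
              omega
            · rw [if_neg hj1, if_neg hj2]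
              omega
        · rw [stmt9A_apply_inr]
          exact Nat.zero_le _
      · -- pendant generator case
        have hm : 1 ≤ mm (Sum.inr i) := by
          have h1 := Finsupp.le_def.mp hle (Sum.inr i)
          simp only [Finsupp.add_apply, stmt9B_apply_inr, stmt9E_apply_inr, hd,
            Finsupp.smul_apply, smul_eq_mul, eq_self_iff_true, if_true, mul_zero,
            add_zero] at h1
          omega
        refine ⟨stmt9Y (t + 3) i, Set.mem_union_right _ ⟨i, rfl⟩, ?_⟩
        rw [Finsupp.le_def]
        rintro (j | j)
        · rw [stmt9Y_apply_inl]; exact Nat.zero_le _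
        · rw [stmt9Y_apply_inr]
          by_cases hj : i = j
          · subst hj; rw [if_pos rfl]; exact hm
          · rw [if_neg hj]; exact Nat.zero_le _
    · rw [Ideal.span_le]
      rintro p ⟨s, hsSJ, rfl⟩
      rw [SetLike.mem_coe, Ideal.mem_colon_span_singleton, monomial_mul, one_mul,
        mem_ideal_span_monomial_image]
      intro xi hxi
      rw [MvPolynomial.support_monomial, if_neg one_ne_zero, Finset.mem_singleton] at hxi
      subst hxi
      rcases hsSJ with ⟨i, rfl⟩ | ⟨i, rfl⟩
      · refine ⟨w • stmt9A (t + 3) i, Set.mem_union_left _ ⟨i, rfl⟩, ?_⟩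
        rw [Finsupp.le_def]
        rintro (j | j)
        · simp only [Finsupp.smul_apply, Finsupp.add_apply, smul_eq_mul, stmt9A_apply_inl,
            stmt9E_apply_inl, hd]
          by_cases h1 : i = j
          · by_cases h2 : i + 1 = j
            · exact absurd (h1.trans h2.symm) (hii1 i)
            · rw [if_pos h1, if_neg h2]; omega
          · by_cases h2 : i + 1 = j
            · rw [if_neg h1, if_pos h2]; omega
            · rw [if_neg h1, if_neg h2]; omega
        · simp only [Finsupp.smul_apply, Finsupp.add_apply, smul_eq_mul, stmt9A_apply_inr,
            stmt9E_apply_inr, hd]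
          omega
      · refine ⟨stmt9B (t + 3) i, Set.mem_union_right _ ⟨i, rfl⟩, ?_⟩
        rw [Finsupp.le_def]
        rintro (j | j)
        · simp only [Finsupp.add_apply, stmt9B_apply_inl, stmt9Y_apply_inl, stmt9E_apply_inl,
            hd, Finsupp.smul_apply, smul_eq_mul]
          split_ifs <;> omega
        · simp only [Finsupp.add_apply, stmt9B_apply_inr, stmt9Y_apply_inr, stmt9E_apply_inr,
            hd, Finsupp.smul_apply, smul_eq_mul]
          split_ifs <;> omega
  rw [hcolon]
  -- the target is a squarefree monomial ideal, hence radical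
  letI : LinearOrder (Fin (t + 3) ⊕ Fin (t + 3)) :=
    LinearOrder.lift' (fun x => Sum.elim (fun i : Fin (t + 3) => (i : ℕ)) (fun i : Fin (t + 3) => (t + 3) + i) x)
      (by
        rintro (a | a) (b | b) h <;> simp only [Sum.elim_inl, Sum.elim_inr] at h
        · exact congrArg Sum.inl (Fin.ext h)
        · exact absurd h (by have := a.isLt; omega)
        · exact absurd h (by have := b.isLt; omega)
        · exact congrArg Sum.inr (Fin.ext (by omega)))
  apply le_antisymm
  · apply sqfree_radical_le (@MonomialOrder.lex (Fin (t + 3) ⊕ Fin (t + 3)) ‹_›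
      (@Finite.to_wellFoundedGT _ _ (@PartialOrder.toPreorder _ (@LinearOrder.toPartialOrder _ ‹_›))))
    rintro s (⟨i, rfl⟩ | ⟨i, rfl⟩) x
    · rcases x with j | j
      · rw [stmt9A_apply_inl]
        by_cases h1 : i = j
        · by_cases h2 : i + 1 = j
          · exact absurd (h1.trans h2.symm) (hii1 i)
          · rw [if_pos h1, if_neg h2]
        · by_cases h2 : i + 1 = j
          · rw [if_neg h1, if_pos h2]
          · rw [if_neg h1, if_neg h2]; omega
      · rw [stmt9A_apply_inr]; omega
    · rcases x with j | j
      · rw [stmt9Y_apply_inl]; omega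
      · rw [stmt9Y_apply_inr]; split_ifs <;> omega
  · exact Ideal.le_radical
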